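/- Every nonscalar polynomially compact bounded operator T on a complex Banach space X of dimension at least 2 has a nontrivial hyperinvariant closed subspace: there exists a closed subspace M of X with {0} ≠ M ≠ X such that S(M) ⊆ M for every bounded operator S on X commuting with T. -/

import Mathlib

open Polynomial

/-- An operator `T` on a complex Banach space is polynomially compact if there is a
nonzero complex polynomial `p` such that `p(T)` is a compact operator. -/
def PolyCompact {X : Type*} [NormedAddCommGroup X] [NormedSpace ℂ X]
    (T : X →L[ℂ] X) : Prop :=
  ∃ p : ℂ[X], p ≠ 0 ∧ IsCompactOperator ⇑(aeval T p)

open Filter Topology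

section Aux

set_option linter.unusedSectionVars false
set_option maxHeartbeats 1000000

variable {X : Type*} [NormedAddCommGroup X] [NormedSpace ℂ X] [CompleteSpace X]

lemma commute_aeval' (S T : X →L[ℂ] X) (h : Commute S T) (p : ℂ[X]) :
    Commute S (aeval T p) := by
  induction p using Polynomial.induction_on' with
  | add p q hp hq => rw [map_add]; exact hp.add_right hq
  | monomial n a =>
    rw [aeval_monomial]
    exact (Commute.symm (Algebra.commutes a S)).mul_right (h.pow_right n)

/-- The kernel of an operator commuting with everything in the commutant of `T`
is hyperinvariant. -/
lemma ker_case_gen (T A : X →L[ℂ] X)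
    (hAcomm : ∀ S : X →L[ℂ] X, S * T = T * S → S * A = A * S)
    (hbot : LinearMap.ker (A : X →ₗ[ℂ] X) ≠ ⊥) (htop : LinearMap.ker (A : X →ₗ[ℂ] X) ≠ ⊤) :
    ∃ M : Submodule ℂ X, IsClosed (M : Set X) ∧ M ≠ ⊥ ∧ M ≠ ⊤ ∧
      ∀ S : X →L[ℂ] X, S * T = T * S → ∀ x ∈ M, S x ∈ M := by
  refine ⟨LinearMap.ker (A : X →ₗ[ℂ] X), ContinuousLinearMap.isClosed_ker A, hbot, htop, ?_⟩
  intro S hS x hx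
  rw [LinearMap.mem_ker] at hx ⊢
  have h1 : A (S x) = S (A x) := by
    have := congrArg (fun f : X →L[ℂ] X => f x) (hAcomm S hS)
    simpa [ContinuousLinearMap.mul_apply] using this.symm
  simp only [ContinuousLinearMap.coe_coe] at hx ⊢; rw [h1, hx, map_zero]

lemma ker_case (T : X →L[ℂ] X) (hnonscalar : ∀ c : ℂ, T ≠ c • (1 : X →L[ℂ] X))
    (lam : ℂ) (hker : LinearMap.ker ((T - lam • (1 : X →L[ℂ] X)) : X →ₗ[ℂ] X) ≠ ⊥) :
    ∃ M : Submodule ℂ X, IsClosed (M : Set X) ∧ M ≠ ⊥ ∧ M ≠ ⊤ ∧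
      ∀ S : X →L[ℂ] X, S * T = T * S → ∀ x ∈ M, S x ∈ M := by
  refine ker_case_gen T (T - lam • (1 : X →L[ℂ] X)) ?_ hker ?_
  · intro S hS
    rw [mul_sub, sub_mul, hS, smul_mul_assoc, mul_smul_comm, one_mul, mul_one]
  · intro htop
    apply hnonscalar lam
    ext x
    have hx : (T - lam • (1 : X →L[ℂ] X)) x = 0 :=
      LinearMap.mem_ker.mp (htop ▸ Submodule.mem_top)
    have := sub_eq_zero.mp (by simpa using hx)
    simpa using this

lemma algebraic_case [Nontrivial X] (T : X →L[ℂ] X) (p : ℂ[X]) (hp : p ≠ 0)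
    (h0 : aeval T p = 0) :
    ∃ lam : ℂ, LinearMap.ker ((T - lam • (1 : X →L[ℂ] X)) : X →ₗ[ℂ] X) ≠ ⊥ := by
  by_contra hcon
  push_neg at hcon
  have hinj : ∀ lam : ℂ, Function.Injective ⇑(T - lam • (1 : X →L[ℂ] X)) := by
    intro lam
    exact LinearMap.ker_eq_bot.mp (hcon lam)
  have key : ∀ n : ℕ, ∀ q : ℂ[X], q.natDegree = n → q ≠ 0 → aeval T q ≠ 0 := by
    intro n
    induction n using Nat.strong_induction_on with
    | _ n ih =>
      intro q hdeg hq0 hq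
      rcases Nat.eq_zero_or_pos n with hn | hn
      · obtain ⟨c, rfl⟩ := Polynomial.natDegree_eq_zero.mp (hdeg.trans hn)
        have hc : c ≠ 0 := fun h => hq0 (by rw [h, map_zero])
        obtain ⟨x, hx⟩ := exists_ne (0 : X)
        have : (aeval T (C c)) x = c • x := by
          simp [aeval_C, Algebra.algebraMap_eq_smul_one]
        rw [hq] at this
        simp at this
        exact hx (by simpa [hc] using this.symm)
      · have hdq : 0 < q.degree := by
          rw [Polynomial.degree_eq_natDegree hq0, hdeg]
          exact_mod_cast hn
        obtain ⟨r, hr⟩ := Complex.exists_root hdq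
        obtain ⟨q', hqfac⟩ := Polynomial.dvd_iff_isRoot.mpr hr
        subst hdeg
        rw [hqfac] at hq0 hq
        have hq'0 : q' ≠ 0 := fun h => hq0 (by rw [h, mul_zero])
        have hdeg' : q'.natDegree < q.natDegree := by
          rw [hqfac, Polynomial.natDegree_mul (Polynomial.X_sub_C_ne_zero r) hq'0,
            Polynomial.natDegree_X_sub_C]
          omega
        have hq' := ih q'.natDegree hdeg' q' rfl hq'0
        apply hq'
        ext x
        have hmul : aeval T ((Polynomial.X - C r) * q') = (T - r • 1) * aeval T q' := by
          rw [map_mul]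
          congr 1
          simp [Algebra.algebraMap_eq_smul_one]
        have : (T - r • (1 : X →L[ℂ] X)) ((aeval T q') x) = 0 := by
          have := congrArg (fun f : X →L[ℂ] X => f x) (hmul ▸ hq)
          simpa [ContinuousLinearMap.mul_apply] using this
        have := hinj r (a₂ := 0) (by simpa using this)
        simpa using this
  exact key p.natDegree p rfl hp h0

lemma bounded_below {K : X →L[ℂ] X} (hK : IsCompactOperator ⇑K) {lam : ℂ} (hlam : lam ≠ 0)
    (hker : LinearMap.ker ((K - lam • (1 : X →L[ℂ] X)) : X →ₗ[ℂ] X) = ⊥) :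
    ∃ c : ℝ, 0 < c ∧ ∀ x : X, c * ‖x‖ ≤ ‖(K - lam • (1 : X →L[ℂ] X)) x‖ := by
  by_contra hcon
  push_neg at hcon
  set f := K - lam • (1 : X →L[ℂ] X) with hf
  have hseq : ∀ n : ℕ, ∃ u : X, ‖u‖ = 1 ∧ ‖f u‖ < 1 / (n + 1) := by
    intro n
    obtain ⟨x, hx⟩ := hcon (1 / (n + 1)) (by positivity)
    have hx0 : 0 < ‖x‖ := by
      by_contra h
      push_neg at h
      have : ‖x‖ = 0 := le_antisymm h (norm_nonneg x)
      rw [this, mul_zero] at hx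
      exact absurd hx (not_lt.mpr (norm_nonneg _))
    refine ⟨((‖x‖ : ℂ))⁻¹ • x, ?_, ?_⟩
    · rw [norm_smul]
      simp [abs_of_pos hx0, inv_mul_cancel₀ hx0.ne']
    · rw [map_smul, norm_smul]
      simp only [norm_inv, Complex.norm_real, Real.norm_eq_abs, abs_of_pos hx0]
      rw [inv_mul_lt_iff₀ hx0]
      calc ‖f x‖ < 1 / (n + 1) * ‖x‖ := hx
        _ = ‖x‖ * (1 / (n+1)) := by ring
        _ ≤ _ := by rw [mul_comm]
  choose u hu1 hu2 using hseq
  have hcpt : IsCompact (closure (⇑K '' Metric.closedBall 0 1)) :=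
    hK.isCompact_closure_image_closedBall (𝕜₁ := ℂ) 1
  have hmem : ∀ n, K (u n) ∈ closure (⇑K '' Metric.closedBall 0 1) := fun n =>
    subset_closure ⟨u n, by simp [hu1 n], rfl⟩
  obtain ⟨z, hz, φ, hφ, hconv⟩ := hcpt.tendsto_subseq hmem
  have hf0 : Tendsto (fun n => f (u (φ n))) atTop (𝓝 0) := by
    rw [tendsto_iff_norm_sub_tendsto_zero]
    simp only [sub_zero]
    apply squeeze_zero (fun n => norm_nonneg _) (fun n => (hu2 (φ n)).le)
    have : Tendsto (fun n : ℕ => 1 / ((n : ℝ) + 1)) atTop (𝓝 0) :=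
      tendsto_one_div_add_atTop_nhds_zero_nat
    exact this.comp hφ.tendsto_atTop
  have hlimu : Tendsto (fun n => u (φ n)) atTop (𝓝 (lam⁻¹ • z)) := by
    have h1 : Tendsto (fun n => lam • u (φ n)) atTop (𝓝 z) := by
      have : (fun n => lam • u (φ n)) = fun n => K (u (φ n)) - f (u (φ n)) := by
        funext n; simp [hf, sub_sub_cancel]
      rw [this]
      simpa using hconv.sub hf0
    have := h1.const_smul (lam⁻¹)
    simpa [smul_smul, inv_mul_cancel₀ hlam] using this
  have hnorm : ‖lam⁻¹ • z‖ = 1 := by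
    have := (continuous_norm.tendsto _).comp hlimu
    simp only [Function.comp_def] at this
    have h2 : Tendsto (fun n : ℕ => (1 : ℝ)) atTop (𝓝 ‖lam⁻¹ • z‖) := by
      convert this using 2
      exact (hu1 _).symm
    exact (tendsto_const_nhds_iff.mp h2).symm
  have hfz : f (lam⁻¹ • z) = 0 := by
    have := ((f.continuous.tendsto _).comp hlimu)
    simp only [Function.comp_def] at this
    exact tendsto_nhds_unique this hf0
  have : lam⁻¹ • z = 0 :=
    (LinearMap.ker_eq_bot.mp hker) (show f (lam⁻¹ • z) = f 0 by rw [hfz, map_zero])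
  rw [this, norm_zero] at hnorm
  norm_num at hnorm

lemma range_case [Nontrivial X] (T K : X →L[ℂ] X) (hK : IsCompactOperator ⇑K)
    (hcomm : ∀ S : X →L[ℂ] X, S * T = T * S → S * K = K * S)
    {lam : ℂ} (hlam : lam ≠ 0) (hspec : lam ∈ spectrum ℂ K)
    (hker : LinearMap.ker ((K - lam • (1 : X →L[ℂ] X)) : X →ₗ[ℂ] X) = ⊥) :
    ∃ M : Submodule ℂ X, IsClosed (M : Set X) ∧ M ≠ ⊥ ∧ M ≠ ⊤ ∧
      ∀ S : X →L[ℂ] X, S * T = T * S → ∀ x ∈ M, S x ∈ M := by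
  obtain ⟨c, hc, hbb⟩ := bounded_below hK hlam hker
  set f := K - lam • (1 : X →L[ℂ] X) with hfdef
  have hinj : Function.Injective ⇑f := LinearMap.ker_eq_bot.mp hker
  have hanti : AntilipschitzWith (Real.toNNReal c)⁻¹ ⇑f := by
    apply AddMonoidHomClass.antilipschitz_of_bound
    intro x
    rw [NNReal.coe_inv, Real.coe_toNNReal c hc.le]
    rw [← div_eq_inv_mul, le_div_iff₀ hc]
    calc ‖x‖ * c = c * ‖x‖ := mul_comm _ _
      _ ≤ ‖f x‖ := hbb x
  have hclosed : IsClosed (Set.range ⇑f) := hanti.isClosed_range f.uniformContinuous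
  refine ⟨LinearMap.range (f : X →ₗ[ℂ] X), ?_, ?_, ?_, ?_⟩
  · rw [LinearMap.coe_range]; exact hclosed
  · intro hbot
    obtain ⟨x, hx⟩ := exists_ne (0 : X)
    have : f x ∈ LinearMap.range (f : X →ₗ[ℂ] X) := LinearMap.mem_range_self (f : X →ₗ[ℂ] X) x
    rw [hbot, Submodule.mem_bot] at this
    exact hx (hinj (by rw [this, map_zero]))
  · intro htop
    have hbij : Function.Bijective ⇑f := ⟨hinj, LinearMap.range_eq_top.mp htop⟩
    have hunit : IsUnit f := ContinuousLinearMap.isUnit_iff_bijective.mpr hbij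
    rw [spectrum.mem_iff] at hspec
    apply hspec
    have : algebraMap ℂ (X →L[ℂ] X) lam - K = -f := by
      rw [hfdef, Algebra.algebraMap_eq_smul_one]; abel
    rw [this]
    exact hunit.neg
  · intro S hS x hx
    obtain ⟨w, rfl⟩ := hx
    have hcf : S * f = f * S := by
      rw [hfdef, mul_sub, sub_mul, hcomm S hS, smul_mul_assoc, mul_smul_comm, one_mul, mul_one]
    exact ⟨S w, by simpa [ContinuousLinearMap.mul_apply] using
      (congrArg (fun g : X →L[ℂ] X => g w) hcf).symm⟩

lemma hilden_case [Nontrivial X] (T K : X →L[ℂ] X) (hKcpt : IsCompactOperator ⇑K) (hK0 : K ≠ 0)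
    (hcomm : ∀ S : X →L[ℂ] X, S * T = T * S → S * K = K * S)
    (hquasi : spectralRadius ℂ K = 0) :
    ∃ M : Submodule ℂ X, IsClosed (M : Set X) ∧ M ≠ ⊥ ∧ M ≠ ⊤ ∧
      ∀ S : X →L[ℂ] X, S * T = T * S → ∀ x ∈ M, S x ∈ M := by
  by_contra hcon
  -- Step 1: dense orbits
  have horb : ∀ y : X, y ≠ 0 →
      Dense {x : X | ∃ S : X →L[ℂ] X, S * T = T * S ∧ S y = x} := by
    intro y hy
    set W : Submodule ℂ X :=
      { carrier := {x : X | ∃ S : X →L[ℂ] X, S * T = T * S ∧ S y = x}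
        add_mem' := by
          rintro a b ⟨S1, h1, rfl⟩ ⟨S2, h2, rfl⟩
          exact ⟨S1 + S2, by rw [add_mul, mul_add, h1, h2], by simp⟩
        zero_mem' := ⟨0, by simp, by simp⟩
        smul_mem' := by
          rintro c a ⟨S, h, rfl⟩
          exact ⟨c • S, by rw [smul_mul_assoc, mul_smul_comm, h], by simp⟩ } with hWdef
    have hWy : y ∈ W := ⟨1, by rw [one_mul, mul_one], ContinuousLinearMap.one_apply y⟩
    have hMinv : ∀ S : X →L[ℂ] X, S * T = T * S →
        ∀ x ∈ W.topologicalClosure, S x ∈ W.topologicalClosure := by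
      intro S hS x hx
      have hmaps : Set.MapsTo ⇑S (W : Set X) (W : Set X) := by
        rintro _ ⟨S', h', rfl⟩
        exact ⟨S * S', by rw [mul_assoc, h', ← mul_assoc, hS, mul_assoc],
          (ContinuousLinearMap.mul_apply S S' y).symm⟩
      have hx' : x ∈ closure (W : Set X) := hx
      have := hmaps.closure S.continuous hx'
      exact this
    have hWtop : W.topologicalClosure = ⊤ := by
      by_contra hne
      refine hcon ⟨W.topologicalClosure, W.isClosed_topologicalClosure, ?_, hne, hMinv⟩
      intro hb
      have : y ∈ W.topologicalClosure := W.le_topologicalClosure hWy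
      rw [hb, Submodule.mem_bot] at this
      exact hy this
    exact Submodule.dense_iff_topologicalClosure_eq_top.mpr hWtop
  -- Step 2: setup
  obtain ⟨x0, hKx0⟩ : ∃ x0 : X, K x0 ≠ 0 := by
    by_contra h
    push_neg at h
    exact hK0 (ContinuousLinearMap.ext fun x => by rw [h x, ContinuousLinearMap.zero_apply])
  have hx0 : x0 ≠ 0 := fun h => hKx0 (by rw [h, map_zero])
  have hx0n : 0 < ‖x0‖ := norm_pos_iff.mpr hx0
  have hKx0n : 0 < ‖K x0‖ := norm_pos_iff.mpr hKx0
  set δ : ℝ := min (‖x0‖ / 2) (‖K x0‖ / (2 * (‖K‖ + 1))) with hδdef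
  have hδ : 0 < δ := lt_min (by positivity) (by positivity)
  set B : Set X := Metric.closedBall x0 δ with hBdef
  have hBnorm : ∀ z ∈ B, ‖x0‖ / 2 ≤ ‖z‖ := by
    intro z hz
    have h1 : ‖x0 - z‖ ≤ δ := by
      rw [← dist_eq_norm]
      rw [dist_comm]
      exact Metric.mem_closedBall.mp hz
    have h2 : ‖x0‖ ≤ δ + ‖z‖ := by
      calc ‖x0‖ = ‖(x0 - z) + z‖ := by rw [sub_add_cancel]
        _ ≤ ‖x0 - z‖ + ‖z‖ := norm_add_le _ _
        _ ≤ δ + ‖z‖ := by linarith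
    have h3 : δ ≤ ‖x0‖ / 2 := min_le_left _ _
    linarith
  have hKB : ∀ z ∈ B, ‖K x0‖ / 2 ≤ ‖K z‖ := by
    intro z hz
    have h1 : ‖x0 - z‖ ≤ δ := by
      rw [← dist_eq_norm, dist_comm]; exact Metric.mem_closedBall.mp hz
    have h2 : ‖K x0 - K z‖ ≤ ‖K‖ * δ := by
      calc ‖K x0 - K z‖ = ‖K (x0 - z)‖ := by rw [map_sub]
        _ ≤ ‖K‖ * ‖x0 - z‖ := K.le_opNorm _
        _ ≤ ‖K‖ * δ := by
            apply mul_le_mul_of_nonneg_left h1 (norm_nonneg K)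
    have h3 : ‖K‖ * δ ≤ ‖K x0‖ / 2 := by
      have h4 : δ ≤ ‖K x0‖ / (2 * (‖K‖ + 1)) := min_le_right _ _
      have h5 : ‖K‖ * δ ≤ ‖K‖ * (‖K x0‖ / (2 * (‖K‖ + 1))) :=
        mul_le_mul_of_nonneg_left h4 (norm_nonneg K)
      have h6 : ‖K‖ * (‖K x0‖ / (2 * (‖K‖ + 1))) ≤ ‖K x0‖ / 2 := by
        rw [← mul_div_assoc, div_le_div_iff₀ (by positivity) (by norm_num : (0:ℝ) < 2)]
        nlinarith [norm_nonneg K, hKx0n]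
      linarith
    have h7 : ‖K x0‖ ≤ ‖K x0 - K z‖ + ‖K z‖ := by
      calc ‖K x0‖ = ‖(K x0 - K z) + K z‖ := by rw [sub_add_cancel]
        _ ≤ _ := norm_add_le _ _
    linarith
  -- Step 3: compact set C
  set C : Set X := closure (⇑K '' B) with hCdef
  have hCcpt : IsCompact C := by
    have hBsub : B ⊆ Metric.closedBall 0 (‖x0‖ + δ) := by
      intro z hz
      rw [Metric.mem_closedBall] at hz ⊢
      calc dist z 0 ≤ dist z x0 + dist x0 0 := dist_triangle _ _ _
        _ ≤ δ + ‖x0‖ := by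
            rw [dist_zero_right]
            exact add_le_add hz le_rfl
        _ = ‖x0‖ + δ := add_comm _ _
    have hbig : IsCompact (closure (⇑K '' Metric.closedBall 0 (‖x0‖ + δ))) :=
      hKcpt.isCompact_closure_image_closedBall (𝕜₁ := ℂ) _
    exact hbig.of_isClosed_subset isClosed_closure
      (closure_mono (Set.image_mono hBsub))
  have hC0 : ∀ y ∈ C, ‖K x0‖ / 2 ≤ ‖y‖ := by
    intro y hy
    have hcl : closure (⇑K '' B) ⊆ {z : X | ‖K x0‖ / 2 ≤ ‖z‖} := by
      apply closure_minimal ?_ (isClosed_le continuous_const continuous_norm)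
      rintro _ ⟨z, hz, rfl⟩
      exact hKB z hz
    exact hcl hy
  -- Step 4: finite subcover
  set ι := {S : X →L[ℂ] X // S * T = T * S} with hιdef
  set U : ι → Set X := fun i => (⇑i.1) ⁻¹' Metric.ball x0 δ with hUdef
  have hUopen : ∀ i : ι, IsOpen (U i) := fun i => Metric.isOpen_ball.preimage i.1.continuous
  have hcover : C ⊆ ⋃ i : ι, U i := by
    intro y hy
    have hyne : y ≠ 0 := by
      intro h
      have := hC0 y hy
      rw [h, norm_zero] at this
      linarith
    have hdense := horb y hyne
    obtain ⟨w, hw1, hw2⟩ := Metric.dense_iff.mp hdense x0 δ hδ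
    obtain ⟨S, hScomm, rfl⟩ := hw2
    refine Set.mem_iUnion.mpr ⟨⟨S, hScomm⟩, ?_⟩
    simp only [U, Set.mem_preimage]
    exact hw1
  obtain ⟨t, ht⟩ := hCcpt.elim_finite_subcover U hUopen hcover
  -- Step 5: the iteration
  set c : ℝ := 1 + ∑ i ∈ t, ‖(i : ι).1‖ with hcdef
  have hc1 : (1:ℝ) ≤ c := le_add_of_nonneg_right (Finset.sum_nonneg fun i _ => norm_nonneg _)
  have hc0 : (0:ℝ) < c := lt_of_lt_of_le one_pos hc1
  have hci : ∀ i ∈ t, ‖(i : ι).1‖ ≤ c := by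
    intro i hi
    have h1 : ‖(i : ι).1‖ ≤ ∑ j ∈ t, ‖(j : ι).1‖ :=
      Finset.single_le_sum (fun j _ => norm_nonneg _) hi
    linarith
  have hchain : ∀ n : ℕ, ∃ P : X →L[ℂ] X, P * K = K * P ∧ ‖P‖ ≤ c ^ n ∧ P ((K ^ n) x0) ∈ B := by
    intro n
    induction n with
    | zero =>
      refine ⟨1, by rw [one_mul, mul_one], by simpa using ContinuousLinearMap.norm_id_le, ?_⟩
      simp only [pow_zero, ContinuousLinearMap.one_apply]
      exact Metric.mem_closedBall_self hδ.le
    | succ n ih =>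
      obtain ⟨P, hPK, hPn, hPB⟩ := ih
      set y := K (P ((K ^ n) x0)) with hydef
      have hyC : y ∈ C := subset_closure ⟨P ((K ^ n) x0), hPB, rfl⟩
      obtain ⟨i, hit, hiy⟩ : ∃ i ∈ t, y ∈ U i := by
        have := ht hyC
        rw [Set.mem_iUnion₂] at this
        obtain ⟨i, hi1, hi2⟩ := this
        exact ⟨i, hi1, hi2⟩
      refine ⟨i.1 * P, ?_, ?_, ?_⟩
      · rw [mul_assoc, hPK, ← mul_assoc, hcomm i.1 i.2, mul_assoc]
      · calc ‖i.1 * P‖ ≤ ‖i.1‖ * ‖P‖ := norm_mul_le _ _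
          _ ≤ c * c ^ n := mul_le_mul (hci i hit) hPn (norm_nonneg _) hc0.le
          _ = c ^ (n + 1) := (pow_succ' c n).symm
      · have hkey : (i.1 * P) ((K ^ (n+1)) x0) = i.1 y := by
          have h1 : P * K ^ (n+1) = K * (P * K ^ n) := by
            rw [pow_succ' K n, ← mul_assoc, hPK, mul_assoc]
          calc (i.1 * P) ((K ^ (n+1)) x0) = i.1 ((P * K ^ (n+1)) x0) := by
                simp [ContinuousLinearMap.mul_apply]
            _ = i.1 ((K * (P * K ^ n)) x0) := by rw [h1]
            _ = i.1 y := by simp [hydef, ContinuousLinearMap.mul_apply]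
        rw [hkey]
        exact Metric.ball_subset_closedBall hiy
  -- Step 6: Gelfand formula and contradiction
  have hgel := spectrum.pow_nnnorm_pow_one_div_tendsto_nhds_spectralRadius K
  rw [hquasi] at hgel
  set ε : ℝ := (2 * c)⁻¹ with hεdef
  have hε : 0 < ε := by positivity
  have hev1 : ∀ᶠ n : ℕ in atTop, (‖K ^ n‖₊ : ENNReal) ^ (1 / (n:ℝ)) < ENNReal.ofReal ε :=
    hgel.eventually_lt_const (ENNReal.ofReal_pos.mpr hε)
  have hev2 : ∀ᶠ n : ℕ in atTop, ((1:ℝ)/2) ^ n * ‖x0‖ < ‖x0‖ / 2 := by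
    have htend : Filter.Tendsto (fun n : ℕ => ((1:ℝ)/2) ^ n * ‖x0‖) atTop (nhds 0) := by
      simpa using (tendsto_pow_atTop_nhds_zero_of_lt_one (r := (1:ℝ)/2) (by norm_num) (by norm_num)).mul_const ‖x0‖
    exact htend.eventually_lt_const (by positivity)
  obtain ⟨n, ⟨hnA, hnB⟩, hn1⟩ :=
    ((hev1.and hev2).and (Filter.eventually_ge_atTop 1)).exists
  have hn0 : (0:ℝ) < (n:ℝ) := by exact_mod_cast hn1
  have hKn : ‖K ^ n‖ ≤ ε ^ n := by
    have h2 : ((‖K ^ n‖₊ : ENNReal) ^ (1/(n:ℝ))) ^ (n:ℝ) ≤ (ENNReal.ofReal ε) ^ (n:ℝ) :=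
      ENNReal.rpow_le_rpow hnA.le (by positivity)
    rw [← ENNReal.rpow_mul, one_div, inv_mul_cancel₀ hn0.ne', ENNReal.rpow_one] at h2
    rw [ENNReal.ofReal_rpow_of_pos hε, ← ENNReal.ofReal_coe_nnreal, coe_nnnorm] at h2
    have h3 := (ENNReal.ofReal_le_ofReal_iff (by positivity)).mp h2
    rwa [Real.rpow_natCast] at h3
  obtain ⟨P, hPK, hPn, hPB⟩ := hchain n
  have hlow : ‖x0‖ / 2 ≤ ‖P ((K ^ n) x0)‖ := hBnorm _ hPB
  have hup : ‖P ((K ^ n) x0)‖ ≤ c ^ n * (‖K ^ n‖ * ‖x0‖) := by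
    calc ‖P ((K ^ n) x0)‖ ≤ ‖P‖ * ‖(K ^ n) x0‖ := P.le_opNorm _
      _ ≤ c ^ n * (‖K ^ n‖ * ‖x0‖) :=
        mul_le_mul hPn ((K ^ n).le_opNorm x0) (norm_nonneg _) (by positivity)
  have hfin : c ^ n * (‖K ^ n‖ * ‖x0‖) ≤ ((1:ℝ)/2) ^ n * ‖x0‖ := by
    have h3 : c ^ n * ‖K ^ n‖ ≤ c ^ n * ε ^ n := mul_le_mul_of_nonneg_left hKn (by positivity)
    have h4 : c ^ n * ε ^ n = ((1:ℝ)/2) ^ n := by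
      rw [← mul_pow]
      congr 1
      rw [hεdef]
      field_simp
    calc c ^ n * (‖K ^ n‖ * ‖x0‖) = (c ^ n * ‖K ^ n‖) * ‖x0‖ := by ring
      _ ≤ (c ^ n * ε ^ n) * ‖x0‖ := mul_le_mul_of_nonneg_right h3 (norm_nonneg _)
      _ = ((1:ℝ)/2) ^ n * ‖x0‖ := by rw [h4]
  linarith

end Aux


set_option maxHeartbeats 1000000

theorem nonscalar_polynomially_compact_has_hyperinvariant_subspace
    {X : Type*} [NormedAddCommGroup X] [NormedSpace ℂ X] [CompleteSpace X]
    (hdim : 2 ≤ Module.rank ℂ X)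
    (T : X →L[ℂ] X)
    (hT : PolyCompact T)
    (hnonscalar : ∀ c : ℂ, T ≠ c • (1 : X →L[ℂ] X)) :
    ∃ M : Submodule ℂ X, IsClosed (M : Set X) ∧ M ≠ ⊥ ∧ M ≠ ⊤ ∧
      ∀ S : X →L[ℂ] X, S * T = T * S → ∀ x ∈ M, S x ∈ M := by
  have hnt : Nontrivial X := by
    rw [← rank_pos_iff_nontrivial (R := ℂ)]
    calc (0 : Cardinal) < 2 := by norm_num
      _ ≤ Module.rank ℂ X := hdim
  obtain ⟨p, hp, hpc⟩ := hT
  set K : X →L[ℂ] X := aeval T p with hKdef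
  have hcommK : ∀ S : X →L[ℂ] X, S * T = T * S → S * K = K * S := by
    intro S hS
    exact commute_aeval' S T hS p
  by_cases hK0 : K = 0
  · obtain ⟨lam, hker⟩ := algebraic_case T p hp (hKdef ▸ hK0)
    exact ker_case T hnonscalar lam hker
  · by_cases hspec : ∃ lam : ℂ, lam ≠ 0 ∧ lam ∈ spectrum ℂ K
    · obtain ⟨lam, hlam, hmem⟩ := hspec
      by_cases hker : LinearMap.ker ((K - lam • (1 : X →L[ℂ] X)) : X →ₗ[ℂ] X) = ⊥
      · exact range_case T K hpc hcommK hlam hmem hker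
      · by_cases hkertop : LinearMap.ker ((K - lam • (1 : X →L[ℂ] X)) : X →ₗ[ℂ] X) = ⊤
        · -- K = lam • 1
          have hKeq : K = lam • (1 : X →L[ℂ] X) := by
            ext x
            have hx : (K - lam • (1 : X →L[ℂ] X)) x = 0 :=
              LinearMap.mem_ker.mp (hkertop ▸ Submodule.mem_top)
            have := sub_eq_zero.mp (by simpa using hx)
            simpa using this
          by_cases hpC : p - C lam = 0
          · -- p = C lam: identity is compact, so X is finite dimensional
            have hpeq : p = C lam := by rwa [sub_eq_zero] at hpC
            have hKfun : ⇑K = fun x : X => lam • x := by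
              funext x
              rw [hKeq]
              simp
            have hidcpt : IsCompactOperator ⇑(1 : X →L[ℂ] X) := by
              have h1 : IsCompactOperator (lam⁻¹ • ⇑K) := hpc.smul lam⁻¹
              have h2 : (lam⁻¹ • ⇑K) = ⇑(1 : X →L[ℂ] X) := by
                funext x
                rw [hKfun]
                simp only [Pi.smul_apply, ContinuousLinearMap.one_apply]
                simp [smul_smul, inv_mul_cancel₀ hlam]
              rwa [h2] at h1
            have hfd : FiniteDimensional ℂ X := by
              apply FiniteDimensional.of_isCompact_closedBall₀ ℂ (r := 1) one_pos
              have h3 : IsCompact (closure (⇑(1 : X →L[ℂ] X) '' Metric.closedBall 0 1)) :=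
                hidcpt.isCompact_closure_image_closedBall (𝕜₁ := ℂ) 1
              have h4 : ⇑(1 : X →L[ℂ] X) '' Metric.closedBall (0:X) 1 = Metric.closedBall 0 1 := by
                rw [show ⇑(1 : X →L[ℂ] X) = (id : X → X) from rfl, Set.image_id]
              rwa [h4, IsClosed.closure_eq Metric.isClosed_closedBall] at h3
            obtain ⟨μ, hμ⟩ := Module.End.exists_eigenvalue (T : X →ₗ[ℂ] X)
            obtain ⟨v, hv⟩ := hμ.exists_hasEigenvector
            apply ker_case T hnonscalar μ
            intro hbot
            apply hv.right
            have hvker : v ∈ LinearMap.ker ((T - μ • (1 : X →L[ℂ] X)) : X →ₗ[ℂ] X) := by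
              rw [LinearMap.mem_ker]
              have := hv.apply_eq_smul
              simp only [ContinuousLinearMap.coe_coe] at this
              simp [this]
            rw [hbot] at hvker
            exact (Submodule.mem_bot ℂ).mp hvker
          · obtain ⟨mu, hmu⟩ := algebraic_case T (p - C lam) hpC (by
              rw [map_sub, aeval_C, ← hKdef, hKeq, Algebra.algebraMap_eq_smul_one, sub_self])
            exact ker_case T hnonscalar mu hmu
        · refine ker_case_gen T (K - lam • (1 : X →L[ℂ] X)) ?_ hker hkertop
          intro S hS
          rw [mul_sub, sub_mul, hcommK S hS, smul_mul_assoc, mul_smul_comm, one_mul, mul_one]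
    · have hrad : spectralRadius ℂ K = 0 := by
        refine le_antisymm ?_ zero_le
        rw [spectralRadius]
        refine iSup₂_le fun k hk => ?_
        have hk0 : k = 0 := by
          by_contra h
          exact hspec ⟨k, h, hk⟩
        simp [hk0]
      exact hilden_case T K hpc hK0 hcommK hrad
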